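/- arXiv:1906.07995 — 2 statements merged into one kernel-verified Lean document; each statement's English description precedes it below -/
import Mathlib

section
/- For every real number β > 1, we have r_β(x) = 0 for Lebesgue-almost every x ∈ [0,1); equivalently, the set { x ∈ [0,1) : r_β(x) > 0 } has Lebesgue measure zero. -/
open Set Filter MeasureTheory
open scoped ENNReal

/-- The β-transformation `x ↦ βx mod 1`. -/
noncomputable def Tbeta (β : ℝ) (x : ℝ) : ℝ := β * x - ⌊β * x⌋

/-- The asymptotic recurrence exponent
`r_β(x) = sup {r ∈ [0,∞] : |T_β^n x - x| < β^{-rn} for infinitely many n}`. -/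
noncomputable def rBeta (β : ℝ) (x : ℝ) : ℝ≥0∞ :=
  ⨆ r ∈ {r : ℝ | 0 ≤ r ∧
      ∃ᶠ n : ℕ in atTop, |(Tbeta β)^[n] x - x| < β ^ (-(r * (n : ℝ)))},
    ENNReal.ofReal r

/-- The uniform recurrence exponent
`r̂_β(x) = sup {r̂ ∈ [0,∞] : ∀ N ≫ 1, ∃ 1 ≤ n ≤ N, |T_β^n x - x| < β^{-r̂N}}`. -/
noncomputable def rHatBeta (β : ℝ) (x : ℝ) : ℝ≥0∞ :=
  ⨆ r ∈ {r : ℝ | 0 ≤ r ∧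
      ∀ᶠ N : ℕ in atTop, ∃ n : ℕ, 1 ≤ n ∧ n ≤ N ∧
        |(Tbeta β)^[n] x - x| < β ^ (-(r * (N : ℝ)))},
    ENNReal.ofReal r

/-! On a cylinder of rank `n` (the points sharing the first `n` digits of their β-expansion)
`T^n` is the affine map `x ↦ β^n x - c`, and the cylinder is an interval that `T^n` maps onto an
interval starting at `0`. Hence a cylinder of length `ℓ` splits into at most `β^(n+1) ℓ + 1`
cylinders of the next rank, so there are at most `β^(n+1)/(β-1)` cylinders of rank `n`; on each of
them `|T^n x - x| < ε` confines `x` to an interval of length `2ε/(β^n - 1)`. So the points with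
`|T^n x - x| < β^(-rn)` have measure `O(β^(-rn))`, and Borel–Cantelli, over rational `r > 0`,
gives the theorem. -/

theorem ncard_image_floor_le_of_mapsTo {α : Type*} {s : Set α} {f : α → ℝ} {m : ℤ}
    {b : ℝ} (hs : s.Nonempty) (hf : MapsTo f s (Icc m b)) :
    (((fun x => ⌊f x⌋) '' s).ncard : ℝ) ≤ b - m + 1 := by
  obtain ⟨x, hx⟩ := hs
  have hmb : m ≤ ⌊b⌋ := Int.le_floor.2 ((hf hx).1.trans (hf hx).2)
  have hsub : (fun x => ⌊f x⌋) '' s ⊆ ((Finset.Icc m ⌊b⌋ : Finset ℤ) : Set ℤ) := by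
    rintro _ ⟨y, hy, rfl⟩
    simpa using ⟨Int.le_floor.2 (hf hy).1, Int.floor_le_floor (hf hy).2⟩
  have hcard : ((Finset.Icc m ⌊b⌋).card : ℤ) = ⌊b⌋ + 1 - m := by
    rw [Int.card_Icc, Int.toNat_of_nonneg (by omega)]
  calc (((fun x => ⌊f x⌋) '' s).ncard : ℝ)
      ≤ (Finset.Icc m ⌊b⌋).card := by
        exact_mod_cast (Set.ncard_le_ncard hsub (Finset.finite_toSet _)).trans_eq
          (Set.ncard_coe_finset _)
    _ = ⌊b⌋ + 1 - m := by exact_mod_cast hcard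
    _ ≤ b - m + 1 := by linarith [Int.floor_le b]

theorem ofReal_diam_le_volume_of_ordConnected {s : Set ℝ} (hs : s.OrdConnected) :
    ENNReal.ofReal (Metric.diam s) ≤ volume s := by
  rcases s.eq_empty_or_nonempty with rfl | hne
  · simp
  by_cases hb : Bornology.IsBounded s
  · rw [Real.diam_eq hb, ← Real.volume_Ioo]
    exact measure_mono (IsConnected.Ioo_csInf_csSup_subset ⟨hne, hs.isPreconnected⟩
      hb.bddBelow hb.bddAbove)
  · simp [Metric.diam_eq_zero_of_unbounded hb]

theorem Tbeta_mem_Ico (β x : ℝ) : Tbeta β x ∈ Ico 0 1 :=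
  ⟨Int.fract_nonneg (β * x), Int.fract_lt_one (β * x)⟩

theorem Tbeta_iterate_mem_Ico {β x : ℝ} (hx : x ∈ Ico 0 1) (n : ℕ) :
    (Tbeta β)^[n] x ∈ Ico 0 1 := by
  cases n with
  | zero => exact hx
  | succ n => rw [Function.iterate_succ_apply']; exact Tbeta_mem_Ico β _

/-- The first `n` digits of the greedy β-expansion of `x`. -/
noncomputable def betaDigits (β x : ℝ) (n : ℕ) : List ℤ :=
  (List.range n).map fun k => ⌊β * (Tbeta β)^[k] x⌋

theorem betaDigits_succ (β x : ℝ) (n : ℕ) :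
    betaDigits β x (n + 1) = betaDigits β x n ++ [⌊β * (Tbeta β)^[n] x⌋] := by
  simp [betaDigits, List.range_succ]

/-- Horner evaluation `∑ dᵢ β^(n-1-i)` of a digit word `[d₀, …, d_{n-1}]`. -/
noncomputable def hornerEval (β : ℝ) (w : List ℤ) : ℝ :=
  w.foldl (fun c d => β * c + d) 0

theorem hornerEval_concat (β : ℝ) (w : List ℤ) (d : ℤ) :
    hornerEval β (w ++ [d]) = β * hornerEval β w + d := by
  simp [hornerEval]

theorem Tbeta_iterate_eq_sub_hornerEval (β x : ℝ) (n : ℕ) :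
    (Tbeta β)^[n] x = β ^ n * x - hornerEval β (betaDigits β x n) := by
  induction n with
  | zero => simp [betaDigits, hornerEval]
  | succ n ih =>
    rw [Function.iterate_succ_apply', betaDigits_succ, hornerEval_concat, Tbeta, ih]
    ring

theorem Tbeta_iterate_sub_of_betaDigits_eq {β x y : ℝ} {n : ℕ}
    (h : betaDigits β x n = betaDigits β y n) :
    (Tbeta β)^[n] x - (Tbeta β)^[n] y = β ^ n * (x - y) := by
  rw [Tbeta_iterate_eq_sub_hornerEval, Tbeta_iterate_eq_sub_hornerEval, h]
  ring

theorem betaDigits_eq_of_mem_Icc {β x y z : ℝ} (hβ : 0 ≤ β) {n : ℕ}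
    (hxy : betaDigits β x n = betaDigits β y n) (hz : z ∈ Icc x y) :
    betaDigits β z n = betaDigits β x n := by
  induction n with
  | zero => rfl
  | succ n ih =>
    simp only [betaDigits_succ, List.append_singleton_inj] at hxy ⊢
    have hzx := ih hxy.1
    have hxz : (Tbeta β)^[n] x ≤ (Tbeta β)^[n] z := by
      nlinarith [Tbeta_iterate_sub_of_betaDigits_eq hzx, pow_nonneg hβ n, hz.1]
    have hzy : (Tbeta β)^[n] z ≤ (Tbeta β)^[n] y := by
      nlinarith [Tbeta_iterate_sub_of_betaDigits_eq (hzx.trans hxy.1), pow_nonneg hβ n, hz.2]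
    refine ⟨hzx, le_antisymm ?_ ?_⟩
    · exact hxy.2 ▸ Int.floor_le_floor (mul_le_mul_of_nonneg_left hzy hβ)
    · exact Int.floor_le_floor (mul_le_mul_of_nonneg_left hxz hβ)

def betaCylinder (β : ℝ) (n : ℕ) (w : List ℤ) : Set ℝ :=
  {x ∈ Ico 0 1 | betaDigits β x n = w}

def betaWords (β : ℝ) (n : ℕ) : Set (List ℤ) :=
  (betaDigits β · n) '' Ico 0 1

theorem ordConnected_betaCylinder {β : ℝ} (hβ : 0 ≤ β) (n : ℕ) (w : List ℤ) :
    (betaCylinder β n w).OrdConnected :=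
  ⟨fun _ hx _ hy _ hz => ⟨Set.ordConnected_Ico.out hx.1 hy.1 hz,
    (betaDigits_eq_of_mem_Icc hβ (hx.2.trans hy.2.symm) hz).trans hx.2⟩⟩

theorem isBounded_betaCylinder (β : ℝ) (n : ℕ) (w : List ℤ) :
    Bornology.IsBounded (betaCylinder β n w) :=
  Metric.isBounded_Ico 0 1 |>.subset fun _ hx => hx.1

theorem Icc_subset_image_betaCylinder {β y : ℝ} (hβ : 0 < β) (hy : y ∈ Ico 0 1) (n : ℕ) :
    Icc 0 ((Tbeta β)^[n] y) ⊆ (Tbeta β)^[n] '' betaCylinder β n (betaDigits β y n) := by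
  induction n with
  | zero => exact fun t ht => ⟨t, ⟨⟨ht.1, ht.2.trans_lt hy.2⟩, rfl⟩, rfl⟩
  | succ n ih =>
    intro t ht
    set d := ⌊β * (Tbeta β)^[n] y⌋
    have hTy : (Tbeta β)^[n + 1] y = β * (Tbeta β)^[n] y - d := by
      rw [Function.iterate_succ_apply']; rfl
    have hd : (0 : ℝ) ≤ d :=
      Int.cast_nonneg_iff.2 (Int.floor_nonneg.2 (mul_nonneg hβ.le (Tbeta_iterate_mem_Ico hy n).1))
    have ht1 : t < 1 := ht.2.trans_lt (Tbeta_iterate_mem_Ico hy _).2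
    -- the point of the cylinder we want lies over `(t + d) / β` at rank `n`
    obtain ⟨z, ⟨hz, hzy⟩, hTz⟩ :
        (t + d) / β ∈ (Tbeta β)^[n] '' betaCylinder β n (betaDigits β y n) := by
      refine ih ⟨by have := ht.1; positivity, ?_⟩
      rw [div_le_iff₀' hβ]
      linarith [ht.2]
    have hβTz : β * (Tbeta β)^[n] z = t + d := by rw [hTz]; field_simp
    have hdz : ⌊β * (Tbeta β)^[n] z⌋ = d := by
      rw [hβTz, Int.floor_add_intCast, Int.floor_eq_zero_iff.2 ⟨ht.1, ht1⟩, zero_add]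
    refine ⟨z, ⟨hz, ?_⟩, ?_⟩
    · rw [betaDigits_succ, betaDigits_succ, hzy, hdz]
    · rw [Function.iterate_succ_apply']
      change β * _ - ⌊β * _⌋ = t
      rw [hdz, hβTz]
      ring

theorem Tbeta_iterate_le_diam_betaCylinder {β x : ℝ} (hβ : 0 < β) {n : ℕ} {w : List ℤ}
    (hx : x ∈ betaCylinder β n w) :
    (Tbeta β)^[n] x ≤ β ^ n * Metric.diam (betaCylinder β n w) := by
  obtain ⟨z, hz, hTz⟩ := Icc_subset_image_betaCylinder hβ hx.1 n
    ⟨le_rfl, (Tbeta_iterate_mem_Ico hx.1 n).1⟩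
  rw [hx.2] at hz
  have hsub := Tbeta_iterate_sub_of_betaDigits_eq (hx.2.trans hz.2.symm)
  have hdist : x - z ≤ Metric.diam (betaCylinder β n w) :=
    (le_abs_self _).trans (Metric.dist_le_diam_of_mem (isBounded_betaCylinder β n w) hx hz)
  rw [hTz] at hsub
  nlinarith [pow_pos hβ n]

theorem sum_diam_betaCylinder_le_one {β : ℝ} (hβ : 0 ≤ β) (n : ℕ) (W : Finset (List ℤ)) :
    ∑ w ∈ W, Metric.diam (betaCylinder β n w) ≤ 1 := by
  have hdisj : (W : Set (List ℤ)).PairwiseDisjoint (betaCylinder β n) :=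
    fun _ _ _ _ hne => Set.disjoint_left.2 fun _ hx hx' => hne (hx.2.symm.trans hx'.2)
  have hvol : ∑ w ∈ W, ENNReal.ofReal (Metric.diam (betaCylinder β n w)) ≤ 1 :=
    calc ∑ w ∈ W, ENNReal.ofReal (Metric.diam (betaCylinder β n w))
        ≤ ∑ w ∈ W, volume (betaCylinder β n w) :=
          Finset.sum_le_sum fun w _ => ofReal_diam_le_volume_of_ordConnected
            (ordConnected_betaCylinder hβ n w)
      _ = volume (⋃ w ∈ W, betaCylinder β n w) :=
          (measure_biUnion_finset hdisj fun w _ =>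
            (ordConnected_betaCylinder hβ n w).measurableSet).symm
      _ ≤ volume (Ico (0 : ℝ) 1) := measure_mono (iUnion₂_subset fun _ _ _ hx => hx.1)
      _ = 1 := by simp
  rwa [← ENNReal.ofReal_sum_of_nonneg (fun _ _ => Metric.diam_nonneg),
    ENNReal.ofReal_le_one] at hvol

theorem betaWords_zero (β : ℝ) : betaWords β 0 = {[]} := by
  simp [betaWords, betaDigits, (nonempty_Ico.2 zero_lt_one).image_const]

theorem betaWords_succ (β : ℝ) (n : ℕ) :
    betaWords β (n + 1) = ⋃ w ∈ betaWords β n,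
      (w ++ [·]) '' ((fun x => ⌊β * (Tbeta β)^[n] x⌋) '' betaCylinder β n w) := by
  ext v
  simp only [betaWords, betaCylinder, betaDigits_succ, mem_image, mem_iUnion, Set.mem_ofPred_eq,
    exists_prop]
  constructor
  · rintro ⟨x, hx, rfl⟩
    exact ⟨_, ⟨x, hx, rfl⟩, _, ⟨x, ⟨hx, rfl⟩, rfl⟩, rfl⟩
  · rintro ⟨w, -, _, ⟨x, ⟨hx, rfl⟩, rfl⟩, rfl⟩
    exact ⟨x, hx, rfl⟩

theorem betaWords_finite {β : ℝ} (hβ : 0 ≤ β) (n : ℕ) : (betaWords β n).Finite := by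
  induction n with
  | zero => simp [betaWords_zero]
  | succ n ih =>
    rw [betaWords_succ]
    refine ih.biUnion fun w _ => ((Set.finite_Icc 0 ⌊β⌋).subset ?_).image _
    rintro _ ⟨x, hx, rfl⟩
    have hT := Tbeta_iterate_mem_Ico (β := β) hx.1 n
    exact ⟨Int.floor_nonneg.2 (mul_nonneg hβ hT.1),
      Int.floor_le_floor (mul_le_of_le_one_right hβ hT.2.le)⟩

theorem ncard_image_floor_betaCylinder_le {β : ℝ} (hβ : 0 < β) {n : ℕ} {w : List ℤ}
    (hw : (betaCylinder β n w).Nonempty) :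
    (((fun x => ⌊β * (Tbeta β)^[n] x⌋) '' betaCylinder β n w).ncard : ℝ)
      ≤ β ^ (n + 1) * Metric.diam (betaCylinder β n w) + 1 := by
  have hmaps : MapsTo (fun x => β * (Tbeta β)^[n] x) (betaCylinder β n w)
      (Icc ((0 : ℤ) : ℝ) (β ^ (n + 1) * Metric.diam (betaCylinder β n w))) := fun x hx =>
    ⟨by simpa using mul_nonneg hβ.le (Tbeta_iterate_mem_Ico hx.1 n).1, by
      rw [pow_succ', mul_assoc]
      exact mul_le_mul_of_nonneg_left (Tbeta_iterate_le_diam_betaCylinder hβ hx) hβ.le⟩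
  simpa using ncard_image_floor_le_of_mapsTo hw hmaps

theorem ncard_betaWords_succ_le {β : ℝ} (hβ : 0 < β) (n : ℕ) :
    ((betaWords β (n + 1)).ncard : ℝ) ≤ (betaWords β n).ncard + β ^ (n + 1) := by
  have hW := betaWords_finite hβ.le n
  set W := hW.toFinset
  calc ((betaWords β (n + 1)).ncard : ℝ)
      ≤ ∑ w ∈ W,
          (((fun x => ⌊β * (Tbeta β)^[n] x⌋) '' betaCylinder β n w).ncard : ℝ) := by
        rw [betaWords_succ, ← hW.coe_toFinset]
        refine (Nat.cast_le.2 (W.set_ncard_biUnion_le _)).trans_eq ?_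
        push_cast
        refine Finset.sum_congr rfl fun w _ => ?_
        rw [Set.ncard_image_of_injective _ fun a b h => by simpa using h]
    _ ≤ ∑ w ∈ W, (β ^ (n + 1) * Metric.diam (betaCylinder β n w) + 1) := by
        refine Finset.sum_le_sum fun w hw => ncard_image_floor_betaCylinder_le hβ ?_
        obtain ⟨y, hy, rfl⟩ := hW.mem_toFinset.1 hw
        exact ⟨y, hy, rfl⟩
    _ = β ^ (n + 1) * ∑ w ∈ W, Metric.diam (betaCylinder β n w) + W.card := by
        rw [Finset.sum_add_distrib, Finset.mul_sum, Finset.sum_const, nsmul_one]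
    _ ≤ β ^ (n + 1) * 1 + W.card := by
        gcongr
        exact sum_diam_betaCylinder_le_one hβ.le n W
    _ = (betaWords β n).ncard + β ^ (n + 1) := by
        rw [Set.ncard_eq_toFinset_card _ hW]
        ring

theorem ncard_betaWords_le {β : ℝ} (hβ : 1 < β) (n : ℕ) :
    ((betaWords β n).ncard : ℝ) ≤ β ^ (n + 1) / (β - 1) := by
  have hβ1 : 0 < β - 1 := sub_pos.2 hβ
  induction n with
  | zero =>
    rw [betaWords_zero, Set.ncard_singleton, le_div_iff₀ hβ1]
    norm_num
  | succ n ih =>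
    calc ((betaWords β (n + 1)).ncard : ℝ) ≤ β ^ (n + 1) / (β - 1) + β ^ (n + 1) :=
          (ncard_betaWords_succ_le (by linarith) n).trans (by linarith)
      _ = β ^ (n + 2) / (β - 1) := by field_simp; ring

def recurrenceSet (β ε : ℝ) (n : ℕ) : Set ℝ :=
  {x ∈ Ico 0 1 | |(Tbeta β)^[n] x - x| < ε}

theorem recurrenceSet_subset_iUnion_ball {β : ℝ} (hβ : 1 < β) {n : ℕ} (hn : n ≠ 0)
    (ε : ℝ) :
    recurrenceSet β ε n ⊆
      ⋃ w ∈ betaWords β n,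
        Metric.ball (hornerEval β w / (β ^ n - 1)) (ε / (β ^ n - 1)) := by
  have hp : 0 < β ^ n - 1 := sub_pos.2 (one_lt_pow₀ hβ hn)
  rintro x ⟨hx, hxε⟩
  refine mem_iUnion₂.2 ⟨_, ⟨x, hx, rfl⟩, ?_⟩
  -- on its cylinder `T^n x - x = (β^n - 1) x - c`, which is small only near `c / (β^n - 1)`
  have hcentre : x - hornerEval β (betaDigits β x n) / (β ^ n - 1)
      = ((Tbeta β)^[n] x - x) / (β ^ n - 1) := by
    rw [Tbeta_iterate_eq_sub_hornerEval]
    field_simp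
    ring
  rw [Metric.mem_ball, Real.dist_eq, hcentre, abs_div, abs_of_pos hp]
  exact div_lt_div_of_pos_right hxε hp

theorem volume_recurrenceSet_le {β : ℝ} (hβ : 1 < β) {n : ℕ} (hn : n ≠ 0) {ε : ℝ}
    (hε : 0 ≤ ε) :
    volume (recurrenceSet β ε n) ≤ ENNReal.ofReal (2 * β ^ 2 / (β - 1) ^ 2 * ε) := by
  have hβ1 : 0 < β - 1 := sub_pos.2 hβ
  have hp : 0 < β ^ n - 1 := sub_pos.2 (one_lt_pow₀ hβ hn)
  have hW := betaWords_finite (β := β) (by linarith) n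
  have hgeom : β ^ (n + 1) / (β - 1) * (2 / (β ^ n - 1)) ≤ 2 * β ^ 2 / (β - 1) ^ 2 := by
    have hβn : β ≤ β ^ n := le_self_pow₀ hβ.le hn
    rw [div_mul_div_comm, div_le_div_iff₀ (by positivity) (by positivity), pow_succ]
    nlinarith [mul_le_mul_of_nonneg_left hβn (by positivity : (0 : ℝ) ≤ β * (β - 1))]
  calc volume (recurrenceSet β ε n)
      ≤ ∑ w ∈ hW.toFinset,
          volume (Metric.ball (hornerEval β w / (β ^ n - 1)) (ε / (β ^ n - 1))) :=
        (measure_mono ((recurrenceSet_subset_iUnion_ball hβ hn ε).trans_eq (by simp))).trans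
          (measure_biUnion_finset_le _ _)
    _ = ENNReal.ofReal ((betaWords β n).ncard * (2 * (ε / (β ^ n - 1)))) := by
        rw [Finset.sum_congr rfl fun w _ => Real.volume_ball _ _, Finset.sum_const, nsmul_eq_mul,
          ENNReal.ofReal_mul (Nat.cast_nonneg _), ENNReal.ofReal_natCast,
          Set.ncard_eq_toFinset_card _ hW]
    _ ≤ ENNReal.ofReal (2 * β ^ 2 / (β - 1) ^ 2 * ε) := by
        refine ENNReal.ofReal_le_ofReal ?_
        calc ((betaWords β n).ncard : ℝ) * (2 * (ε / (β ^ n - 1)))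
            = (betaWords β n).ncard * (2 / (β ^ n - 1)) * ε := by ring
          _ ≤ β ^ (n + 1) / (β - 1) * (2 / (β ^ n - 1)) * ε := by
            gcongr
            exact ncard_betaWords_le hβ n
          _ ≤ 2 * β ^ 2 / (β - 1) ^ 2 * ε := by gcongr

theorem volume_limsup_recurrenceSet_eq_zero {β r : ℝ} (hβ : 1 < β) (hr : 0 < r) :
    volume (limsup (fun n : ℕ => recurrenceSet β (β ^ (-(r * n))) n) atTop) = 0 := by
  set ρ := β ^ (-r)
  have hρ0 : 0 ≤ ρ := by positivity
  have hρ1 : ρ < 1 := Real.rpow_lt_one_of_one_lt_of_neg hβ (neg_lt_zero.2 hr)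
  have hpow (n : ℕ) : β ^ (-(r * n)) = ρ ^ n := by
    rw [← Real.rpow_natCast, ← Real.rpow_mul (by linarith), neg_mul]
  set C := 2 * β ^ 2 / (β - 1) ^ 2
  have hsum : Summable fun n : ℕ => C * ρ ^ (n + 1) :=
    (summable_nat_add_iff 1).2 ((summable_geometric_of_lt_one hρ0 hρ1).mul_left C)
  rw [← limsup_nat_add _ 1]
  refine measure_limsup_atTop_eq_zero (ne_top_of_le_ne_top ?_
    (ENNReal.tsum_le_tsum fun n => volume_recurrenceSet_le hβ n.succ_ne_zero (by positivity)))
  simp_rw [hpow]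
  rw [← ENNReal.ofReal_tsum_of_nonneg (fun n => by positivity) hsum]
  exact ENNReal.ofReal_ne_top

theorem exists_rat_frequently_of_rBeta_ne_zero {β x : ℝ} (hβ : 1 ≤ β)
    (h : rBeta β x ≠ 0) :
    ∃ q : ℚ, 0 < q ∧
      ∃ᶠ n : ℕ in atTop, |(Tbeta β)^[n] x - x| < β ^ (-((q : ℝ) * n)) := by
  simp only [rBeta, ne_eq, ENNReal.iSup_eq_zero, not_forall, ENNReal.ofReal_eq_zero,
    not_le] at h
  obtain ⟨r, ⟨-, hfreq⟩, hr⟩ := h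
  obtain ⟨q, hq, hqr⟩ := exists_rat_btwn hr
  refine ⟨q, by exact_mod_cast hq, hfreq.mono fun n hn => hn.trans_le ?_⟩
  gcongr

theorem rBeta_zero_ae (β : ℝ) (hβ : 1 < β) :
    volume {x ∈ Set.Ico (0 : ℝ) 1 | rBeta β x ≠ 0} = 0 := by
  have hsub : {x ∈ Ico (0 : ℝ) 1 | rBeta β x ≠ 0} ⊆ ⋃ q : ℚ, ⋃ _ : 0 < q,
      limsup (fun n : ℕ => recurrenceSet β (β ^ (-((q : ℝ) * n))) n) atTop := by
    rintro x ⟨hx, hne⟩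
    obtain ⟨q, hq, hfreq⟩ := exists_rat_frequently_of_rBeta_ne_zero hβ.le hne
    exact mem_iUnion₂.2
      ⟨q, hq, mem_limsup_iff_frequently_mem.2 (hfreq.mono fun _ hn => ⟨hx, hn⟩)⟩
  exact measure_mono_null hsub (measure_iUnion_null fun q => measure_iUnion_null fun hq =>
    volume_limsup_recurrenceSet_eq_zero hβ (by exact_mod_cast hq))
end

section
/- Let β > 1 be real. For every n ≥ 1, the number #Σ_β^n of β-admissible words of length n satisfies β^n ≤ #Σ_β^n ≤ β^{n+1}/(β − 1), and moreover lim_{n→∞} (log #Σ_β^n)/n = log β. -/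
open Set Filter MeasureTheory
open scoped ENNReal

/-- The `n`-th digit `ε_n(x,β) = ⌊β T_β^{n-1} x⌋` of the β-expansion (for `n ≥ 1`). -/
noncomputable def epsDigit (β : ℝ) (x : ℝ) (n : ℕ) : ℤ := ⌊β * (Tbeta β)^[n - 1] x⌋

/-- A word `ω` of length `n` over the digits is β-admissible if it occurs as the first `n`
digits of the β-expansion of some `x ∈ [0,1)`. -/
def IsAdmissible (β : ℝ) {n : ℕ} (ω : Fin n → ℤ) : Prop :=
  ∃ x ∈ Set.Ico (0 : ℝ) 1, ∀ j : Fin n, epsDigit β x ((j : ℕ) + 1) = ω j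

/-- `Σ_β^n`, the set of β-admissible words of length `n`. -/
def SigmaSet (β : ℝ) (n : ℕ) : Set (Fin n → ℤ) := {ω | IsAdmissible β ω}

/-- The cylinder `I_n(ω)` of points of `[0,1)` whose first `n` digits form the word `ω`. -/
def cylinder (β : ℝ) {n : ℕ} (ω : Fin n → ℤ) : Set ℝ :=
  {x ∈ Set.Ico (0 : ℝ) 1 | ∀ j : Fin n, epsDigit β x ((j : ℕ) + 1) = ω j}

/-- A word `ω` of length `n` is full if its cylinder has length `β^{-n}`. -/
def IsFull (β : ℝ) {n : ℕ} (ω : Fin n → ℤ) : Prop :=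
  volume (cylinder β ω) = ENNReal.ofReal ((β ^ n)⁻¹)

section aux
variable {β : ℝ} (hβ : 1 < β)

lemma Tbeta_mem (x : ℝ) : Tbeta β x ∈ Set.Ico (0:ℝ) 1 := by
  have : Tbeta β x = Int.fract (β * x) := rfl
  rw [this]
  exact ⟨Int.fract_nonneg _, Int.fract_lt_one _⟩

lemma Tbeta_iter_mem {x : ℝ} (hx : x ∈ Set.Ico (0:ℝ) 1) (n : ℕ) :
    (Tbeta β)^[n] x ∈ Set.Ico (0:ℝ) 1 := by
  cases n with
  | zero => exact hx
  | succ n => rw [Function.iterate_succ_apply']; exact Tbeta_mem _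

lemma epsDigit_succ (x : ℝ) (n : ℕ) :
    epsDigit β x (n + 1) = ⌊β * (Tbeta β)^[n] x⌋ := rfl

lemma epsDigit_shift (x : ℝ) (n : ℕ) :
    epsDigit β (Tbeta β x) (n + 1) = epsDigit β x (n + 2) := by
  show ⌊β * (Tbeta β)^[n] (Tbeta β x)⌋ = ⌊β * (Tbeta β)^[n+1] x⌋
  rw [Function.iterate_succ_apply]

/-- partial sum of the β-expansion -/
noncomputable def tpart (β x : ℝ) (n : ℕ) : ℝ :=
  ∑ k ∈ Finset.range n, (epsDigit β x (k + 1) : ℝ) / β ^ (k + 1)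

lemma tpart_zero (x : ℝ) : tpart β x 0 = 0 := by simp [tpart]

include hβ

lemma beta_pos : (0:ℝ) < β := lt_trans one_pos hβ

lemma beta_ne : (β:ℝ) ≠ 0 := ne_of_gt (beta_pos hβ)

/-- fundamental identity -/
lemma iter_eq (x : ℝ) (n : ℕ) : (Tbeta β)^[n] x = β ^ n * (x - tpart β x n) := by
  induction n with
  | zero => simp [tpart_zero]
  | succ n ih =>
    rw [Function.iterate_succ_apply']
    have hd : ((⌊β * (Tbeta β)^[n] x⌋ : ℤ) : ℝ) = (epsDigit β x (n+1) : ℝ) := rfl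
    show β * (Tbeta β)^[n] x - (⌊β * (Tbeta β)^[n] x⌋ : ℝ) = _
    rw [hd, ih]
    simp only [tpart, Finset.sum_range_succ] at *
    have hb : (β:ℝ) ≠ 0 := beta_ne hβ
    field_simp
    ring

lemma tpart_le {x : ℝ} (hx : x ∈ Set.Ico (0:ℝ) 1) (n : ℕ) :
    tpart β x n ≤ x ∧ x < tpart β x n + (β ^ n)⁻¹ := by
  have h := iter_eq hβ x n
  have hm := Tbeta_iter_mem (β := β) hx n
  have hbn : (0:ℝ) < β ^ n := pow_pos (beta_pos hβ) n
  constructor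
  · nlinarith [hm.1, hbn]
  · have h2 : β ^ n * (x - tpart β x n) < 1 := h ▸ hm.2
    have h3 : (β ^ n)⁻¹ * (β ^ n) = 1 := inv_mul_cancel₀ (ne_of_gt hbn)
    nlinarith [mul_pos (inv_pos.2 hbn) hbn]

lemma epsDigit_nonneg {x : ℝ} (hx : x ∈ Set.Ico (0:ℝ) 1) (k : ℕ) :
    0 ≤ epsDigit β x (k + 1) := by
  rw [epsDigit_succ]
  have hm := Tbeta_iter_mem (β := β) hx k
  exact Int.floor_nonneg.2 (mul_nonneg (le_of_lt (beta_pos hβ)) hm.1)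

lemma epsDigit_le {x : ℝ} (hx : x ∈ Set.Ico (0:ℝ) 1) (k : ℕ) :
    epsDigit β x (k + 1) ≤ ⌊β⌋ := by
  rw [epsDigit_succ]
  have hm := Tbeta_iter_mem (β := β) hx k
  exact Int.floor_le_floor (by nlinarith [hm.1, hm.2, beta_pos hβ])

omit hβ in
lemma epsDigit_le_mul {x : ℝ} (k : ℕ) :
    (epsDigit β x (k + 1) : ℝ) ≤ β * (Tbeta β)^[k] x := by
  rw [epsDigit_succ]; exact Int.floor_le _

end aux

section aux2
variable {β : ℝ} (hβ : 1 < β)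

omit hβ in
lemma epsDigit_one (x : ℝ) : epsDigit β x 1 = ⌊β * x⌋ := rfl

include hβ

lemma Tbeta_le_Tbeta {x z : ℝ} (hxz : x ≤ z) (hfl : ⌊β * x⌋ = ⌊β * z⌋) :
    Tbeta β x ≤ Tbeta β z := by
  unfold Tbeta
  have : β * x ≤ β * z := mul_le_mul_of_nonneg_left hxz (le_of_lt (beta_pos hβ))
  rw [hfl]; linarith

lemma digits_convex : ∀ (n : ℕ) {x z y : ℝ}, x ∈ Set.Ico (0:ℝ) 1 → z ∈ Set.Ico (0:ℝ) 1 →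
    y ∈ Set.Ico (0:ℝ) 1 → x ≤ z → z ≤ y →
    (∀ k, k < n → epsDigit β x (k+1) = epsDigit β y (k+1)) →
    ∀ k, k < n → epsDigit β z (k+1) = epsDigit β x (k+1) := by
  intro n
  induction n with
  | zero => intro _ _ _ _ _ _ _ _ _ k hk; omega
  | succ n ih =>
    intro x z y hx hz hy hxz hzy hxy k hk
    have hb := le_of_lt (beta_pos hβ)
    have h0 : ⌊β * x⌋ = ⌊β * y⌋ := by
      have := hxy 0 (Nat.succ_pos n); rwa [epsDigit_one, epsDigit_one] at this
    have h1 : ⌊β * x⌋ ≤ ⌊β * z⌋ :=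
      Int.floor_le_floor (mul_le_mul_of_nonneg_left hxz hb)
    have h2 : ⌊β * z⌋ ≤ ⌊β * y⌋ :=
      Int.floor_le_floor (mul_le_mul_of_nonneg_left hzy hb)
    have hfz : ⌊β * z⌋ = ⌊β * x⌋ := by omega
    have hTxz : Tbeta β x ≤ Tbeta β z := Tbeta_le_Tbeta hβ hxz hfz.symm
    have hTzy : Tbeta β z ≤ Tbeta β y := Tbeta_le_Tbeta hβ hzy (by omega)
    have hrec := ih (x := Tbeta β x) (z := Tbeta β z) (y := Tbeta β y)
      (Tbeta_mem x) (Tbeta_mem z) (Tbeta_mem y) hTxz hTzy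
      (fun j hj => by rw [epsDigit_shift, epsDigit_shift]; exact hxy (j+1) (by omega))
    match k, hk with
    | 0, _ => rw [epsDigit_one, epsDigit_one, hfz]
    | (j+1), hk =>
      have := hrec j (by omega)
      rw [epsDigit_shift, epsDigit_shift] at this
      exact this

lemma tpart_nonneg {x : ℝ} (hx : x ∈ Set.Ico (0:ℝ) 1) (n : ℕ) : 0 ≤ tpart β x n := by
  apply Finset.sum_nonneg
  intro k _
  apply div_nonneg _ (le_of_lt (pow_pos (beta_pos hβ) _))
  exact_mod_cast epsDigit_nonneg hβ hx k

lemma tpart_mem {x : ℝ} (hx : x ∈ Set.Ico (0:ℝ) 1) (n : ℕ) :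
    tpart β x n ∈ Set.Ico (0:ℝ) 1 :=
  ⟨tpart_nonneg hβ hx n, lt_of_le_of_lt (tpart_le hβ hx n).1 hx.2⟩

lemma Tbeta_tpart {x : ℝ} (hx : x ∈ Set.Ico (0:ℝ) 1) (n : ℕ) :
    ⌊β * tpart β x (n+1)⌋ = ⌊β * x⌋ ∧
    Tbeta β (tpart β x (n+1)) = tpart β (Tbeta β x) n := by
  have hb := beta_pos hβ
  have hbne := beta_ne hβ
  have hsum : tpart β x (n+1)
      = (∑ k ∈ Finset.range n, (epsDigit β x (k+2) : ℝ) / β ^ (k+2))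
        + (epsDigit β x 1 : ℝ) / β ^ 1 := by
    rw [tpart, Finset.sum_range_succ']
  have hlow : (epsDigit β x 1 : ℝ) / β ≤ tpart β x (n+1) := by
    rw [hsum, pow_one]
    have : (0:ℝ) ≤ ∑ k ∈ Finset.range n, (epsDigit β x (k+2) : ℝ) / β ^ (k+2) := by
      apply Finset.sum_nonneg
      intro k _
      apply div_nonneg _ (le_of_lt (pow_pos hb _))
      exact_mod_cast epsDigit_nonneg hβ hx (k+1)
    linarith
  have hfl : ⌊β * tpart β x (n+1)⌋ = ⌊β * x⌋ := by
    apply le_antisymm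
    · exact Int.floor_le_floor (mul_le_mul_of_nonneg_left (tpart_le hβ hx (n+1)).1 (le_of_lt hb))
    · apply Int.le_floor.2
      rw [epsDigit_one] at hlow
      calc ((⌊β * x⌋:ℤ):ℝ) = β * ((⌊β * x⌋:ℝ) / β) := by field_simp
        _ ≤ β * tpart β x (n+1) := mul_le_mul_of_nonneg_left hlow (le_of_lt hb)
  refine ⟨hfl, ?_⟩
  show β * tpart β x (n+1) - (⌊β * tpart β x (n+1)⌋ : ℝ) = _
  rw [hfl]
  have : β * tpart β x (n+1) - (⌊β * x⌋ : ℝ)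
      = ∑ k ∈ Finset.range n, (epsDigit β x (k+2) : ℝ) / β ^ (k+1) := by
    rw [hsum, mul_add, Finset.mul_sum]
    rw [epsDigit_one, pow_one]
    have h1 : β * ((⌊β * x⌋:ℝ) / β) = (⌊β * x⌋:ℝ) := by field_simp
    rw [h1]
    simp only [add_sub_cancel_right]
    apply Finset.sum_congr rfl
    intro k _
    rw [pow_succ]
    field_simp
  rw [this, tpart]
  apply Finset.sum_congr rfl
  intro k _
  rw [epsDigit_shift]

lemma tpart_digits : ∀ (n : ℕ) {x : ℝ}, x ∈ Set.Ico (0:ℝ) 1 →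
    ∀ k, k < n → epsDigit β (tpart β x n) (k+1) = epsDigit β x (k+1) := by
  intro n
  induction n with
  | zero => intro _ _ k hk; omega
  | succ n ih =>
    intro x hx k hk
    obtain ⟨hfl, hT⟩ := Tbeta_tpart hβ hx n
    match k, hk with
    | 0, _ => rw [epsDigit_one, epsDigit_one, hfl]
    | (j+1), hk =>
      rw [← epsDigit_shift, ← epsDigit_shift, hT]
      exact ih (Tbeta_mem x) j (by omega)

end aux2

section aux3
variable {β : ℝ} (hβ : 1 < β) {n : ℕ}

include hβ

lemma cylinder_ordConnected (ω : Fin n → ℤ) : (cylinder β ω).OrdConnected := by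
  constructor
  rintro x ⟨hx01, hxd⟩ y ⟨hy01, hyd⟩ z hz
  have hz01 : z ∈ Set.Ico (0:ℝ) 1 :=
    ⟨le_trans hx01.1 hz.1, lt_of_le_of_lt hz.2 hy01.2⟩
  have hd := digits_convex hβ n hx01 hz01 hy01 hz.1 hz.2
    (fun k hk => by rw [hxd ⟨k, hk⟩, hyd ⟨k, hk⟩])
  exact ⟨hz01, fun j => by rw [hd j j.2, hxd j]⟩

lemma cylinder_measurable (ω : Fin n → ℤ) : MeasurableSet (cylinder β ω) :=
  (cylinder_ordConnected hβ ω).measurableSet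

lemma tpart_mem_cylinder {ω : Fin n → ℤ} {x : ℝ} (hx : x ∈ cylinder β ω) :
    tpart β x n ∈ cylinder β ω := by
  refine ⟨tpart_mem hβ hx.1 n, fun j => ?_⟩
  rw [tpart_digits hβ n hx.1 j j.2, hx.2 j]

lemma tpart_eq_of_mem {ω : Fin n → ℤ} {x z : ℝ} (hx : x ∈ cylinder β ω)
    (hz : z ∈ cylinder β ω) : tpart β z n = tpart β x n := by
  unfold tpart
  apply Finset.sum_congr rfl
  intro k hk
  have hk' := Finset.mem_range.1 hk
  rw [hz.2 ⟨k, hk'⟩, hx.2 ⟨k, hk'⟩]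

lemma cylinder_subset_Ico {ω : Fin n → ℤ} {x : ℝ} (hx : x ∈ cylinder β ω) :
    cylinder β ω ⊆ Set.Ico (tpart β x n) (tpart β x n + (β ^ n)⁻¹) := by
  intro z hz
  rw [← tpart_eq_of_mem hβ hx hz]
  exact ⟨(tpart_le hβ hz.1 n).1, (tpart_le hβ hz.1 n).2⟩

lemma volume_cylinder_le {ω : Fin n → ℤ} (hω : IsAdmissible β ω) :
    volume (cylinder β ω) ≤ ENNReal.ofReal ((β ^ n)⁻¹) := by
  obtain ⟨x, hx01, hxd⟩ := hω
  have hx : x ∈ cylinder β ω := ⟨hx01, hxd⟩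
  calc volume (cylinder β ω)
      ≤ volume (Set.Ico (tpart β x n) (tpart β x n + (β ^ n)⁻¹)) :=
        measure_mono (cylinder_subset_Ico hβ hx)
    _ = ENNReal.ofReal ((β ^ n)⁻¹) := by rw [Real.volume_Ico]; ring_nf

lemma volume_cylinder_ge {ω : Fin n → ℤ} {x : ℝ} (hx : x ∈ cylinder β ω) :
    ENNReal.ofReal ((epsDigit β x (n+1) : ℝ) * (β ^ (n+1))⁻¹) ≤ volume (cylinder β ω) := by
  have hsub : Set.Icc (tpart β x n) x ⊆ cylinder β ω :=
    Set.OrdConnected.out (cylinder_ordConnected hβ ω) (tpart_mem_cylinder hβ hx) hx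
  calc ENNReal.ofReal ((epsDigit β x (n+1) : ℝ) * (β ^ (n+1))⁻¹)
      ≤ ENNReal.ofReal (x - tpart β x n) := by
        apply ENNReal.ofReal_le_ofReal
        have h1 : (epsDigit β x (n+1) : ℝ) ≤ β * (Tbeta β)^[n] x := epsDigit_le_mul n
        have h2 : (Tbeta β)^[n] x = β ^ n * (x - tpart β x n) := iter_eq hβ x n
        have hbp : (0:ℝ) < β ^ (n+1) := pow_pos (beta_pos hβ) _
        calc (epsDigit β x (n+1) : ℝ) * (β ^ (n+1))⁻¹
              ≤ (β * (Tbeta β)^[n] x) * (β ^ (n+1))⁻¹ := by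
                apply mul_le_mul_of_nonneg_right h1 (le_of_lt (inv_pos.2 hbp))
            _ = x - tpart β x n := by
                rw [h2, pow_succ]
                field_simp
    _ = volume (Set.Icc (tpart β x n) x) := (Real.volume_Icc).symm
    _ ≤ volume (cylinder β ω) := measure_mono hsub

omit hβ in
lemma cylinder_disjoint {ω ω' : Fin n → ℤ} (hne : ω ≠ ω') :
    Disjoint (cylinder β ω) (cylinder β ω') := by
  rw [Set.disjoint_left]
  rintro x ⟨_, hx⟩ ⟨_, hx'⟩
  exact hne (funext fun j => by rw [← hx j, ← hx' j])

lemma sigma_finite : (SigmaSet β n).Finite := by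
  apply Set.Finite.subset (Set.Finite.pi (fun _ : Fin n => Set.finite_Icc (0:ℤ) ⌊β⌋))
  rintro ω ⟨x, hx01, hxd⟩
  intro j _
  rw [← hxd j]
  exact ⟨epsDigit_nonneg hβ hx01 j, epsDigit_le hβ hx01 j⟩

end aux3

section aux4
variable {β : ℝ} (hβ : 1 < β) {n : ℕ}

include hβ

lemma cylinders_cover :
    ⋃ ω ∈ (sigma_finite hβ (n := n)).toFinset, cylinder β ω = Set.Ico (0:ℝ) 1 := by
  apply subset_antisymm
  · refine Set.iUnion₂_subset fun ω _ => fun z hz => hz.1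
  · intro x hx
    have h1 : (fun j : Fin n => epsDigit β x ((j:ℕ)+1)) ∈ (sigma_finite hβ (n := n)).toFinset := by
      rw [Set.Finite.mem_toFinset]
      exact ⟨x, hx, fun j => rfl⟩
    exact Set.mem_biUnion h1 ⟨hx, fun j => rfl⟩

lemma sum_vol :
    ∑ ω ∈ (sigma_finite hβ (n := n)).toFinset, volume (cylinder β ω) = 1 := by
  rw [← measure_biUnion_finset]
  · rw [cylinders_cover hβ, Real.volume_Ico]
    norm_num
  · intro ω _ ω' _ hne
    exact cylinder_disjoint hne
  · exact fun ω _ => cylinder_measurable hβ ω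

lemma vol_ne_top (ω : Fin n → ℤ) (hω : IsAdmissible β ω) : volume (cylinder β ω) ≠ ⊤ :=
  ne_top_of_le_ne_top ENNReal.ofReal_ne_top (volume_cylinder_le hβ hω)

lemma sum_vol_real :
    ∑ ω ∈ (sigma_finite hβ (n := n)).toFinset, (volume (cylinder β ω)).toReal = 1 := by
  rw [← ENNReal.toReal_sum, sum_vol hβ, ENNReal.toReal_one]
  intro ω hω
  exact vol_ne_top hβ ω (((sigma_finite hβ).mem_toFinset).1 hω)

lemma card_lower (n : ℕ) : β ^ n ≤ ((SigmaSet β n).ncard : ℝ) := by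
  have hfin := sigma_finite hβ (n := n)
  have hbn : (0:ℝ) < β ^ n := pow_pos (beta_pos hβ) n
  have h1 : (1:ℝ) ≤ (hfin.toFinset.card : ℝ) * (β ^ n)⁻¹ := by
    rw [← sum_vol_real hβ]
    calc ∑ ω ∈ hfin.toFinset, (volume (cylinder β ω)).toReal
        ≤ ∑ _ω ∈ hfin.toFinset, (β ^ n)⁻¹ := by
          apply Finset.sum_le_sum
          intro ω hω
          exact ENNReal.toReal_le_of_le_ofReal (le_of_lt (inv_pos.2 hbn))
            (volume_cylinder_le hβ (((sigma_finite hβ).mem_toFinset).1 hω))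
      _ = (hfin.toFinset.card : ℝ) * (β ^ n)⁻¹ := by
          rw [Finset.sum_const, nsmul_eq_mul]
  rw [Set.ncard_eq_toFinset_card _ hfin]
  have := mul_le_mul_of_nonneg_right h1 (le_of_lt hbn)
  rw [one_mul, mul_assoc, inv_mul_cancel₀ (ne_of_gt hbn), mul_one] at this
  linarith

lemma card_succ_le (n : ℕ) :
    ((SigmaSet β (n+1)).ncard : ℝ) ≤ β ^ (n+1) + ((SigmaSet β n).ncard : ℝ) := by
  classical
  have hfin1 := sigma_finite hβ (n := n+1)
  have hfin0 := sigma_finite hβ (n := n)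
  set F1 := hfin1.toFinset with hF1
  set F0 := hfin0.toFinset with hF0
  have hmap : ∀ τ ∈ F1, Fin.init τ ∈ F0 := by
    intro τ hτ
    obtain ⟨x, hx01, hxd⟩ := ((sigma_finite hβ).mem_toFinset).1 hτ
    rw [Set.Finite.mem_toFinset]
    refine ⟨x, hx01, fun j => ?_⟩
    have := hxd (Fin.castSucc j)
    rwa [Fin.coe_castSucc] at this
  have hcard := Finset.card_eq_sum_card_fiberwise hmap
  have hfib : ∀ ω ∈ F0, ((F1.filter (fun τ => Fin.init τ = ω)).card : ℝ)
      ≤ β ^ (n+1) * (volume (cylinder β ω)).toReal + 1 := by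
    intro ω hω
    have hωadm : IsAdmissible β ω := (hfin0.mem_toFinset).1 hω
    set v : ℝ := (volume (cylinder β ω)).toReal with hv
    have hv0 : 0 ≤ v := ENNReal.toReal_nonneg
    have hbn : (0:ℝ) < β ^ (n+1) := pow_pos (beta_pos hβ) _
    have hA0 : (0:ℤ) ≤ ⌊β ^ (n+1) * v⌋ := Int.floor_nonneg.2 (mul_nonneg (le_of_lt hbn) hv0)
    set A : ℤ := ⌊β ^ (n+1) * v⌋ with hA
    have hinj : ((F1.filter (fun τ => Fin.init τ = ω)).card : ℝ)
        ≤ ((Finset.Icc (0:ℤ) A).card : ℝ) := by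
      have := Finset.card_le_card_of_injOn (f := fun τ => τ (Fin.last n))
        (s := F1.filter (fun τ => Fin.init τ = ω)) (t := Finset.Icc 0 A) ?_ ?_
      · exact_mod_cast this
      · intro τ hτ
        obtain ⟨hτ1, hτ2⟩ := Finset.mem_filter.1 hτ
        obtain ⟨x, hx01, hxd⟩ := ((sigma_finite hβ).mem_toFinset).1 hτ1
        have hxc : x ∈ cylinder β ω := by
          refine ⟨hx01, fun j => ?_⟩
          rw [← hτ2]
          have := hxd (Fin.castSucc j)
          rwa [Fin.coe_castSucc] at this
        have hlast : epsDigit β x (n+1) = τ (Fin.last n) := by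
          have := hxd (Fin.last n)
          rwa [Fin.val_last] at this
        have h0 : (0:ℤ) ≤ τ (Fin.last n) := hlast ▸ epsDigit_nonneg hβ hx01 n
        have hle2 : τ (Fin.last n) ≤ A := by
          rw [← hlast, hA]
          apply Int.le_floor.2
          have hge := volume_cylinder_ge hβ hxc
          have hle : (epsDigit β x (n+1) : ℝ) * (β ^ (n+1))⁻¹ ≤ v := by
            rw [hv]
            exact (ENNReal.ofReal_le_iff_le_toReal (vol_ne_top hβ ω hωadm)).1 hge
          have := mul_le_mul_of_nonneg_right hle (le_of_lt hbn)
          rwa [mul_assoc, inv_mul_cancel₀ (ne_of_gt hbn), mul_one, mul_comm v _] at this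
        exact Finset.mem_Icc.2 ⟨h0, hle2⟩
      · intro τ hτ τ' hτ' hee
        obtain ⟨_, h2⟩ := Finset.mem_filter.1 (Finset.mem_coe.1 hτ)
        obtain ⟨_, h2'⟩ := Finset.mem_filter.1 (Finset.mem_coe.1 hτ')
        have hee' : τ (Fin.last n) = τ' (Fin.last n) := hee
        have : Fin.snoc (Fin.init τ) (τ (Fin.last n)) =
            Fin.snoc (Fin.init τ') (τ' (Fin.last n)) := by
          rw [h2, h2', hee']
        rwa [Fin.snoc_init_self, Fin.snoc_init_self] at this
    calc ((F1.filter (fun τ => Fin.init τ = ω)).card : ℝ)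
        ≤ ((Finset.Icc (0:ℤ) A).card : ℝ) := hinj
      _ = ((A + 1 - 0).toNat : ℝ) := by rw [Int.card_Icc]
      _ ≤ β ^ (n+1) * v + 1 := by
          have hfl := Int.floor_le (β ^ (n+1) * v)
          rw [← hA] at hfl
          have ht : ((A + 1 - 0).toNat : ℤ) = A + 1 := by omega
          have h2 : ((A + 1 - 0).toNat : ℝ) = (A:ℝ) + 1 := by
            exact_mod_cast congrArg (fun z : ℤ => (z : ℝ)) ht
          rw [h2]
          linarith
  rw [Set.ncard_eq_toFinset_card _ hfin1, Set.ncard_eq_toFinset_card _ hfin0]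
  calc ((F1.card : ℕ) : ℝ) = ∑ ω ∈ F0, ((F1.filter (fun τ => Fin.init τ = ω)).card : ℝ) := by
        rw [hcard]; push_cast; rfl
    _ ≤ ∑ ω ∈ F0, (β ^ (n+1) * (volume (cylinder β ω)).toReal + 1) :=
        Finset.sum_le_sum hfib
    _ = β ^ (n+1) * (∑ ω ∈ F0, (volume (cylinder β ω)).toReal) + F0.card := by
        rw [Finset.sum_add_distrib, ← Finset.mul_sum, Finset.sum_const, nsmul_eq_mul, mul_one]
    _ = β ^ (n+1) + F0.card := by rw [sum_vol_real hβ, mul_one]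

lemma card_zero : (SigmaSet β 0).ncard = 1 := by
  have : SigmaSet β 0 = Set.univ := by
    ext ω
    simp only [SigmaSet, IsAdmissible, Set.mem_setOf_eq, Set.mem_univ, iff_true]
    exact ⟨0, ⟨le_refl _, one_pos⟩, fun j => j.elim0⟩
  rw [this, Set.ncard_univ]
  exact Nat.card_unique

lemma card_upper (n : ℕ) :
    ((SigmaSet β n).ncard : ℝ) ≤ ∑ k ∈ Finset.range (n+1), β ^ k := by
  induction n with
  | zero => rw [card_zero hβ]; simp
  | succ n ih =>
    calc ((SigmaSet β (n+1)).ncard : ℝ) ≤ β ^ (n+1) + ((SigmaSet β n).ncard : ℝ) :=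
          card_succ_le hβ n
      _ ≤ β ^ (n+1) + ∑ k ∈ Finset.range (n+1), β ^ k := by linarith
      _ = ∑ k ∈ Finset.range (n+2), β ^ k := by
          rw [Finset.sum_range_succ (fun k => β ^ k) (n+1)]
          ring

lemma card_upper' (n : ℕ) :
    ((SigmaSet β n).ncard : ℝ) ≤ β ^ (n+1) / (β - 1) := by
  have h1 : (0:ℝ) < β - 1 := by linarith
  calc ((SigmaSet β n).ncard : ℝ) ≤ ∑ k ∈ Finset.range (n+1), β ^ k := card_upper hβ n
    _ = (β ^ (n+1) - 1) / (β - 1) := geom_sum_eq (by linarith) (n+1)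
    _ ≤ β ^ (n+1) / (β - 1) :=
        div_le_div₀ (le_of_lt (pow_pos (beta_pos hβ) _)) (by linarith) h1 (le_refl _)
end aux4


theorem card_SigmaSet (β : ℝ) (hβ : 1 < β) :
    (∀ n : ℕ, 1 ≤ n →
      β ^ n ≤ ((SigmaSet β n).ncard : ℝ) ∧
      ((SigmaSet β n).ncard : ℝ) ≤ β ^ (n + 1) / (β - 1)) ∧
    Filter.Tendsto (fun n : ℕ => Real.log ((SigmaSet β n).ncard) / (n : ℝ))
      Filter.atTop (nhds (Real.log β)) := by
  have hb1 : (1:ℝ) ≤ β := le_of_lt hβ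
  have hb0 : (0:ℝ) < β := beta_pos hβ
  have hbm : (0:ℝ) < β - 1 := by linarith
  refine ⟨fun n _ => ⟨card_lower hβ n, card_upper' hβ n⟩, ?_⟩
  set L := Real.log β with hL
  set M := Real.log (β - 1) with hM
  have hL0 : 0 ≤ L := Real.log_nonneg hb1
  apply tendsto_of_tendsto_of_tendsto_of_le_of_le' (g := fun _ : ℕ => L)
    (h := fun n : ℕ => L + (L - M) / (n : ℝ))
  · exact tendsto_const_nhds
  · have h2 : Filter.Tendsto (fun n : ℕ => (L - M) / (n : ℝ)) Filter.atTop (nhds 0) :=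
      tendsto_const_div_atTop_nhds_zero_nat _
    have := tendsto_const_nhds (x := L) (f := Filter.atTop (α := ℕ)) |>.add h2
    simpa using this
  · filter_upwards [Filter.eventually_ge_atTop 1] with n hn
    have hn0 : (0:ℝ) < (n : ℝ) := by exact_mod_cast hn
    have hlow := card_lower hβ n
    have hpow : (1:ℝ) ≤ β ^ n := one_le_pow₀ hb1
    have hN1 : (1:ℝ) ≤ ((SigmaSet β n).ncard : ℝ) := le_trans hpow hlow
    have hlog : (n : ℝ) * L ≤ Real.log ((SigmaSet β n).ncard) := by
      calc (n : ℝ) * L = Real.log (β ^ n) := by rw [Real.log_pow]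
        _ ≤ Real.log ((SigmaSet β n).ncard) :=
            Real.log_le_log (pow_pos hb0 n) hlow
    rw [le_div_iff₀ hn0]
    linarith
  · filter_upwards [Filter.eventually_ge_atTop 1] with n hn
    have hn0 : (0:ℝ) < (n : ℝ) := by exact_mod_cast hn
    have hN1 : (0:ℝ) < ((SigmaSet β n).ncard : ℝ) :=
      lt_of_lt_of_le (pow_pos hb0 n) (card_lower hβ n)
    have hup := card_upper' hβ n
    have hlog : Real.log ((SigmaSet β n).ncard) ≤ ((n:ℝ)+1) * L - M := by
      calc Real.log ((SigmaSet β n).ncard) ≤ Real.log (β ^ (n+1) / (β - 1)) :=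
            Real.log_le_log hN1 hup
        _ = ((n:ℝ)+1) * L - M := by
            rw [Real.log_div (ne_of_gt (pow_pos hb0 _)) (ne_of_gt hbm), Real.log_pow]
            push_cast
            ring
    calc Real.log ((SigmaSet β n).ncard) / (n:ℝ) ≤ (((n:ℝ)+1) * L - M) / (n:ℝ) := by
          gcongr  -- needs log ncard sign? a/c ≤ b/c from a ≤ b
        -- fallback below
      _ = L + (L - M) / (n:ℝ) := by field_simp; ring
end
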